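/- arXiv:2006.07726 — 2 statements merged into one kernel-verified Lean document; each statement's English description precedes it below -/
import Mathlib

section
/- Let X and Y be positive semidefinite n×n complex matrices and p, q ∈ (1, ∞) with 1/p + 1/q = 1. Then 0 ≤ Tr(XY) ≤ (Tr(X^p))^{1/p} (Tr(Y^q))^{1/q} ≤ (1/p) Tr(X^p) + (1/q) Tr(Y^q). -/
open Matrix
open scoped ComplexOrder

-- Real power of a (Hermitian) matrix via the spectral functional calculus;
-- junk value `0` for non-Hermitian matrices.
open Classical in
noncomputable def mpow {n : Type*} [Fintype n] [DecidableEq n]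
    (A : Matrix n n ℂ) (r : ℝ) : Matrix n n ℂ :=
  if h : A.IsHermitian then h.cfc (fun x => x ^ r) else 0

private lemma trace_cfc_eq {n : Type*} [Fintype n] [DecidableEq n]
    {A : Matrix n n ℂ} (hA : A.IsHermitian) (f : ℝ → ℝ) :
    (hA.cfc f).trace = ((∑ i, f (hA.eigenvalues i) : ℝ) : ℂ) := by
  rw [Matrix.IsHermitian.cfc, Unitary.conjStarAlgAut_apply, Matrix.trace_mul_comm, ← Matrix.mul_assoc,
    Matrix.mem_unitaryGroup_iff'.mp hA.eigenvectorUnitary.2, Matrix.one_mul,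
    Matrix.trace_diagonal]
  push_cast
  rfl

/-- Hölder/Young chain: for positive semidefinite `X, Y` and conjugate exponents
`p, q ∈ (1, ∞)`, `0 ≤ Tr(XY) ≤ (Tr X^p)^{1/p} (Tr Y^q)^{1/q} ≤ (1/p)Tr X^p + (1/q)Tr Y^q`. -/
theorem trace_holder_young {n : Type*} [Fintype n] [DecidableEq n]
    (X Y : Matrix n n ℂ) (hX : X.PosSemidef) (hY : Y.PosSemidef)
    (p q : ℝ) (hp : 1 < p) (hq : 1 < q) (hpq : 1 / p + 1 / q = 1) :
    0 ≤ ((X * Y).trace).re ∧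
      ((X * Y).trace).re ≤
        ((mpow X p).trace.re) ^ (1 / p) * ((mpow Y q).trace.re) ^ (1 / q) ∧
      ((mpow X p).trace.re) ^ (1 / p) * ((mpow Y q).trace.re) ^ (1 / q) ≤
        (1 / p) * (mpow X p).trace.re + (1 / q) * (mpow Y q).trace.re := by
  have hp0 : p ≠ 0 := by positivity
  have hq0 : q ≠ 0 := by positivity
  have hXh : X.IsHermitian := hX.1
  have hYh : Y.IsHermitian := hY.1
  set d : n → ℝ := hXh.eigenvalues with hd
  set e : n → ℝ := hYh.eigenvalues with he
  have hd0 : ∀ i, 0 ≤ d i := hX.eigenvalues_nonneg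
  have he0 : ∀ i, 0 ≤ e i := hY.eigenvalues_nonneg
  set U : Matrix n n ℂ := ↑hXh.eigenvectorUnitary with hU
  set V : Matrix n n ℂ := ↑hYh.eigenvectorUnitary with hV
  set W : Matrix n n ℂ := star U * V with hWdef
  set s : n → n → ℝ := fun i j => Complex.normSq (W i j) with hs
  have hs0 : ∀ i j, 0 ≤ s i j := fun i j => Complex.normSq_nonneg _
  have hUU : star U * U = 1 := Matrix.mem_unitaryGroup_iff'.mp hXh.eigenvectorUnitary.2
  have hUU' : U * star U = 1 := Matrix.mem_unitaryGroup_iff.mp hXh.eigenvectorUnitary.2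
  have hVV : star V * V = 1 := Matrix.mem_unitaryGroup_iff'.mp hYh.eigenvectorUnitary.2
  have hVV' : V * star V = 1 := Matrix.mem_unitaryGroup_iff.mp hYh.eigenvectorUnitary.2
  have hWW : W * star W = 1 := by
    rw [hWdef, StarMul.star_mul, star_star, Matrix.mul_assoc, ← Matrix.mul_assoc V, hVV',
      Matrix.one_mul, hUU]
  have hWW' : star W * W = 1 := by
    rw [hWdef, StarMul.star_mul, star_star, Matrix.mul_assoc, ← Matrix.mul_assoc U, hUU',
      Matrix.one_mul, hVV]
  have hrow : ∀ i, ∑ j, s i j = 1 := by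
    intro i
    have h1 : (W * star W) i i = 1 := by rw [hWW]; simp
    rw [Matrix.mul_apply] at h1
    have h2 : ((∑ j, s i j : ℝ) : ℂ) = 1 := by
      push_cast
      rw [← h1]
      refine Finset.sum_congr rfl fun j _ => ?_
      simp [hs, Matrix.star_apply, Complex.star_def, Complex.mul_conj]
    exact_mod_cast h2
  have hcol : ∀ j, ∑ i, s i j = 1 := by
    intro j
    have h1 : (star W * W) j j = 1 := by rw [hWW']; simp
    rw [Matrix.mul_apply] at h1
    have h2 : ((∑ i, s i j : ℝ) : ℂ) = 1 := by
      push_cast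
      rw [← h1]
      refine Finset.sum_congr rfl fun i _ => ?_
      rw [Matrix.star_apply, Complex.star_def, mul_comm, Complex.mul_conj]
    exact_mod_cast h2
  -- trace formula
  have hT : (X * Y).trace = ((∑ i, ∑ j, d i * e j * s i j : ℝ) : ℂ) := by
    conv_lhs => rw [hXh.spectral_theorem, hYh.spectral_theorem, Unitary.conjStarAlgAut_apply,
      Unitary.conjStarAlgAut_apply]
    have hre : (U * diagonal (RCLike.ofReal ∘ d) * star U *
        (V * diagonal (RCLike.ofReal ∘ e) * star V)).trace
        = (diagonal (RCLike.ofReal ∘ d) * (W * diagonal (RCLike.ofReal ∘ e) * star W)).trace := by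
      calc (U * diagonal (RCLike.ofReal ∘ d) * star U *
            (V * diagonal (RCLike.ofReal ∘ e) * star V)).trace
          = (U * (diagonal (RCLike.ofReal ∘ d) * (star U *
            (V * (diagonal (RCLike.ofReal ∘ e) * star V))))).trace := by
            simp only [Matrix.mul_assoc]
        _ = ((diagonal (RCLike.ofReal ∘ d) * (star U *
            (V * (diagonal (RCLike.ofReal ∘ e) * star V)))) * U).trace :=
            Matrix.trace_mul_comm _ _
        _ = (diagonal (RCLike.ofReal ∘ d) * (W * diagonal (RCLike.ofReal ∘ e) * star W)).trace := by
            rw [hWdef, StarMul.star_mul, star_star]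
            simp only [Matrix.mul_assoc]
    rw [hre, Matrix.trace]
    push_cast
    refine Finset.sum_congr rfl fun i _ => ?_
    rw [Matrix.diag_apply, Matrix.diagonal_mul, Matrix.mul_apply, Finset.mul_sum]
    refine Finset.sum_congr rfl fun j _ => ?_
    rw [Matrix.mul_diagonal, Matrix.star_apply, Complex.star_def]
    have hz : W i j * (starRingEnd ℂ) (W i j) = ((s i j : ℝ) : ℂ) := Complex.mul_conj _
    simp only [Function.comp_apply, RCLike.ofReal_alg, Complex.real_smul, mul_one]
    linear_combination ((d i : ℂ) * (e j : ℂ)) * hz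
  -- traces of powers
  have htX : (mpow X p).trace.re = ∑ i, d i ^ p := by
    unfold mpow
    rw [dif_pos hXh, trace_cfc_eq hXh, Complex.ofReal_re]
  have htY : (mpow Y q).trace.re = ∑ j, e j ^ q := by
    unfold mpow
    rw [dif_pos hYh, trace_cfc_eq hYh, Complex.ofReal_re]
  have hpq' : Real.HolderConjugate p q :=
    Real.holderConjugate_iff.mpr ⟨hp, by rw [← one_div, ← one_div]; exact hpq⟩
  have hA0 : 0 ≤ ∑ i, d i ^ p := Finset.sum_nonneg fun i _ => Real.rpow_nonneg (hd0 i) p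
  have hB0 : 0 ≤ ∑ j, e j ^ q := Finset.sum_nonneg fun j _ => Real.rpow_nonneg (he0 j) q
  rw [hT, Complex.ofReal_re, htX, htY]
  refine ⟨?_, ?_, ?_⟩
  · exact Finset.sum_nonneg fun i _ => Finset.sum_nonneg fun j _ =>
      mul_nonneg (mul_nonneg (hd0 i) (he0 j)) (hs0 i j)
  · -- Hölder
    have key := Real.inner_le_Lp_mul_Lq_of_nonneg (Finset.univ : Finset (n × n))
      (f := fun k => d k.1 * s k.1 k.2 ^ (1 / p))
      (g := fun k => e k.2 * s k.1 k.2 ^ (1 / q)) hpq'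
      (fun k _ => mul_nonneg (hd0 k.1) (Real.rpow_nonneg (hs0 k.1 k.2) _))
      (fun k _ => mul_nonneg (he0 k.2) (Real.rpow_nonneg (hs0 k.1 k.2) _))
    have hfg : ∑ k : n × n, (d k.1 * s k.1 k.2 ^ (1 / p)) * (e k.2 * s k.1 k.2 ^ (1 / q))
        = ∑ i, ∑ j, d i * e j * s i j := by
      rw [Fintype.sum_prod_type]
      refine Finset.sum_congr rfl fun i _ => Finset.sum_congr rfl fun j _ => ?_
      rw [show (d i * s i j ^ (1 / p)) * (e j * s i j ^ (1 / q))
          = d i * e j * (s i j ^ (1 / p) * s i j ^ (1 / q)) by ring,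
        ← Real.rpow_add' (hs0 i j) (by rw [hpq]; exact one_ne_zero), hpq, Real.rpow_one]
    have hfp : ∑ k : n × n, (d k.1 * s k.1 k.2 ^ (1 / p)) ^ p = ∑ i, d i ^ p := by
      rw [Fintype.sum_prod_type]
      refine Finset.sum_congr rfl fun i _ => ?_
      have h1 : ∀ j : n, (d i * s i j ^ (1 / p)) ^ p = d i ^ p * s i j := fun j => by
        rw [Real.mul_rpow (hd0 i) (Real.rpow_nonneg (hs0 i j) _), ← Real.rpow_mul (hs0 i j),
          one_div_mul_cancel hp0, Real.rpow_one]
      rw [Finset.sum_congr rfl fun j _ => h1 j, ← Finset.mul_sum, hrow i, mul_one]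
    have hgq : ∑ k : n × n, (e k.2 * s k.1 k.2 ^ (1 / q)) ^ q = ∑ j, e j ^ q := by
      rw [Fintype.sum_prod_type, Finset.sum_comm]
      refine Finset.sum_congr rfl fun j _ => ?_
      have h1 : ∀ i : n, (e j * s i j ^ (1 / q)) ^ q = e j ^ q * s i j := fun i => by
        rw [Real.mul_rpow (he0 j) (Real.rpow_nonneg (hs0 i j) _), ← Real.rpow_mul (hs0 i j),
          one_div_mul_cancel hq0, Real.rpow_one]
      rw [Finset.sum_congr rfl fun i _ => h1 i, ← Finset.mul_sum, hcol j, mul_one]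
    rw [← hfg, ← hfp, ← hgq]
    exact key
  · have hy := Real.young_inequality_of_nonneg (Real.rpow_nonneg hA0 (1 / p))
      (Real.rpow_nonneg hB0 (1 / q)) hpq'
    rw [← Real.rpow_mul hA0, ← Real.rpow_mul hB0, one_div_mul_cancel hp0,
      Real.rpow_one, one_div_mul_cancel hq0, Real.rpow_one] at hy
    calc ((∑ i, d i ^ p) ^ (1 / p)) * ((∑ j, e j ^ q) ^ (1 / q))
        ≤ (∑ i, d i ^ p) / p + (∑ j, e j ^ q) / q := hy
      _ = (1 / p) * (∑ i, d i ^ p) + (1 / q) * (∑ j, e j ^ q) := by ring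
end

section
/- Let ρ and σ be positive definite n×n complex matrices, α > 1, z > 1, and for a positive definite matrix H define f(H) := z · Tr(σ^{(z-α)/(2z)} ρ^{α/z} σ^{(z-α)/(2z)} H) − (z−1) · Tr[(σ^{(z-1)/(2z)} H σ^{(z-1)/(2z)})^{z/(z-1)}]. Then sup over positive definite H of f(H) equals Tr[(σ^{(1-α)/(2z)} ρ^{α/z} σ^{(1-α)/(2z)})^{z}], and the supremum is attained at H = σ^{(1-z)/(2z)} (σ^{(1-α)/(2z)} ρ^{α/z} σ^{(1-α)/(2z)})^{z-1} σ^{(1-z)/(2z)}. -/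
open Matrix
open scoped ComplexOrder

section aux
variable {n : Type*} [Fintype n] [DecidableEq n]

lemma contOnFin (f : ℝ → ℝ) (A : Matrix n n ℂ) : ContinuousOn f (spectrum ℝ A) :=
  (Matrix.finite_real_spectrum (A := A)).continuousOn f

lemma mpow_eq_hcfc {A : Matrix n n ℂ} (hA : A.IsHermitian) (r : ℝ) :
    mpow A r = hA.cfc (fun x => x ^ r) := dif_pos hA

lemma mpow_eq_cfc {A : Matrix n n ℂ} (hA : A.IsHermitian) (r : ℝ) :
    mpow A r = cfc (fun x : ℝ => x ^ r) A := by
  rw [hA.cfc_eq]; exact dif_pos hA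

lemma mpow_isHermitian {A : Matrix n n ℂ} (hA : A.IsHermitian) (r : ℝ) :
    (mpow A r).IsHermitian := by
  rw [mpow_eq_cfc hA]
  exact cfc_predicate (fun x : ℝ => x ^ r) A

lemma spectrum_pos {A : Matrix n n ℂ} (hA : A.PosDef) :
    ∀ x ∈ spectrum ℝ A, 0 < x := by
  intro x hx
  rw [hA.1.spectrum_real_eq_range_eigenvalues] at hx
  obtain ⟨i, rfl⟩ := hx
  exact hA.eigenvalues_pos i

lemma mpow_mul_mpow {A : Matrix n n ℂ} (hA : A.PosDef) (r s : ℝ) :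
    mpow A r * mpow A s = mpow A (r + s) := by
  rw [mpow_eq_cfc hA.1, mpow_eq_cfc hA.1, mpow_eq_cfc hA.1,
    ← cfc_mul _ _ A (contOnFin _ A) (contOnFin _ A)]
  exact cfc_congr fun x hx => (Real.rpow_add (spectrum_pos hA x hx) r s).symm

lemma mpow_zero {A : Matrix n n ℂ} (hA : A.IsHermitian) : mpow A 0 = 1 := by
  have ha : IsSelfAdjoint A := hA
  rw [mpow_eq_cfc hA]
  calc cfc (fun x : ℝ => x ^ (0:ℝ)) A = cfc (fun _ : ℝ => (1:ℝ)) A :=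
        cfc_congr fun x _ => Real.rpow_zero x
  _ = 1 := cfc_const_one ℝ A

lemma mpow_one {A : Matrix n n ℂ} (hA : A.IsHermitian) : mpow A 1 = A := by
  have ha : IsSelfAdjoint A := hA
  rw [mpow_eq_cfc hA]
  calc cfc (fun x : ℝ => x ^ (1:ℝ)) A = cfc (fun x : ℝ => x) A :=
        cfc_congr fun x _ => Real.rpow_one x
  _ = A := cfc_id' ℝ A

lemma mpow_mpow {A : Matrix n n ℂ} (hA : A.PosDef) (r s : ℝ) :
    mpow (mpow A r) s = mpow A (r * s) := by
  have ha : IsSelfAdjoint A := hA.1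
  rw [mpow_eq_cfc (mpow_isHermitian hA.1 r), mpow_eq_cfc hA.1, mpow_eq_cfc hA.1,
    ← cfc_comp (fun x : ℝ => x ^ s) (fun x : ℝ => x ^ r) A ha
      (((Matrix.finite_real_spectrum (A := A)).image _).continuousOn _) (contOnFin _ A)]
  exact cfc_congr fun x hx => ((Real.rpow_mul (spectrum_pos hA x hx).le r s).symm : _)

lemma posDef_conj {M B : Matrix n n ℂ} (hM : M.PosDef) (hB : IsUnit B) :
    (Bᴴ * M * B).PosDef := by
  exact (Matrix.IsUnit.posDef_star_left_conjugate_iff hB).mpr hM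

lemma trace_hcfc {A : Matrix n n ℂ} (hA : A.IsHermitian) (f : ℝ → ℝ) :
    (hA.cfc f).trace = ∑ i, (f (hA.eigenvalues i) : ℂ) := by
  rw [Matrix.IsHermitian.cfc, Unitary.conjStarAlgAut_apply, Matrix.trace_mul_cycle]
  rw [show (star (hA.eigenvectorUnitary : Matrix n n ℂ)) * (hA.eigenvectorUnitary : Matrix n n ℂ)
      = 1 from Matrix.mem_unitaryGroup_iff'.mp (SetLike.coe_mem _), one_mul, trace_diagonal]
  simp [Function.comp]

lemma trace_mpow_re {A : Matrix n n ℂ} (hA : A.IsHermitian) (r : ℝ) :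
    ((mpow A r).trace).re = ∑ i, hA.eigenvalues i ^ r := by
  rw [mpow_eq_hcfc hA, trace_hcfc]
  rw [← Complex.ofReal_sum]
  exact Complex.ofReal_re _

lemma mpow_posDef {A : Matrix n n ℂ} (hA : A.PosDef) (r : ℝ) : (mpow A r).PosDef := by
  rw [mpow_eq_hcfc hA.1, Matrix.IsHermitian.cfc]
  set U : Matrix n n ℂ := (hA.1.eigenvectorUnitary : Matrix n n ℂ) with hUdef
  have hmem := (SetLike.coe_mem hA.1.eigenvectorUnitary)
  have h1 : star U * U = 1 := Matrix.mem_unitaryGroup_iff'.mp hmem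
  have h2 : U * star U = 1 := Matrix.mem_unitaryGroup_iff.mp hmem
  have hU : IsUnit (star U) := ⟨⟨star U, U, h1, h2⟩, rfl⟩
  have hd : (Matrix.diagonal (RCLike.ofReal ∘ (fun x => x ^ r) ∘ hA.1.eigenvalues)
      : Matrix n n ℂ).PosDef := by
    refine Matrix.PosDef.diagonal fun i => ?_
    simp only [Function.comp_apply, RCLike.ofReal_pos]
    exact Real.rpow_pos_of_pos (hA.eigenvalues_pos i) r
  have := posDef_conj hd hU
  rwa [Matrix.star_eq_conjTranspose, Matrix.conjTranspose_conjTranspose] at this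

lemma conj_entry (W : Matrix n n ℂ) (μ : n → ℝ) (i : n) :
    (star W * (Matrix.diagonal (RCLike.ofReal ∘ μ) : Matrix n n ℂ) * W) i i
      = ((∑ j, μ j * Complex.normSq (W j i) : ℝ) : ℂ) := by
  rw [Matrix.mul_apply, Complex.ofReal_sum]
  refine Finset.sum_congr rfl fun j _ => ?_
  rw [Matrix.mul_diagonal, Matrix.star_apply]
  have key : ∀ (w : ℂ) (t : ℝ), star w * ↑t * w = ((t * Complex.normSq w : ℝ) : ℂ) := by
    intro w t
    calc star w * ↑t * w = ↑t * (w * star w) := by ring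
    _ = ↑t * ↑(Complex.normSq w) := by rw [Complex.star_def, Complex.mul_conj]
    _ = _ := by push_cast; ring
  simpa using key (W j i) (μ j)

lemma unitary_col_sum {W : Matrix n n ℂ} (hW : star W * W = 1) (i : n) :
    ∑ j, Complex.normSq (W j i) = 1 := by
  have h : (star W * W) i i = (1 : Matrix n n ℂ) i i := by rw [hW]
  rw [Matrix.mul_apply, Matrix.one_apply_eq] at h
  have h2 : (∑ j, (star W) i j * W j i) = ((∑ j, Complex.normSq (W j i) : ℝ) : ℂ) := by
    rw [Complex.ofReal_sum]
    refine Finset.sum_congr rfl fun j _ => ?_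
    rw [Matrix.star_apply, Complex.star_def, mul_comm, Complex.mul_conj]
  rw [h2] at h
  exact_mod_cast h

lemma unitary_row_sum {W : Matrix n n ℂ} (hW : W * star W = 1) (j : n) :
    ∑ i, Complex.normSq (W j i) = 1 := by
  have h : (W * star W) j j = (1 : Matrix n n ℂ) j j := by rw [hW]
  rw [Matrix.mul_apply, Matrix.one_apply_eq] at h
  have h2 : (∑ i, W j i * (star W) i j) = ((∑ i, Complex.normSq (W j i) : ℝ) : ℂ) := by
    rw [Complex.ofReal_sum]
    refine Finset.sum_congr rfl fun i _ => ?_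
    rw [Matrix.star_apply, Complex.star_def, Complex.mul_conj]
  rw [h2] at h
  exact_mod_cast h

lemma key_ineq {M K : Matrix n n ℂ} (hM : M.PosDef) (hK : K.PosDef) {z : ℝ} (hz : 1 < z) :
    z * ((M * K).trace).re
      ≤ ((mpow M z).trace).re + (z - 1) * ((mpow K (z / (z - 1))).trace).re := by
  have hz0 : (0:ℝ) < z := lt_trans one_pos hz
  set q : ℝ := z / (z - 1) with hq
  have hpq : z.HolderConjugate q := (Real.holderConjugate_iff_eq_conjExponent hz).mpr hq
  set U : Matrix n n ℂ := (hK.1.eigenvectorUnitary : Matrix n n ℂ) with hU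
  set V : Matrix n n ℂ := (hM.1.eigenvectorUnitary : Matrix n n ℂ) with hV
  set d : n → ℝ := hK.1.eigenvalues with hd
  set μ : n → ℝ := hM.1.eigenvalues with hμ
  set W : Matrix n n ℂ := star V * U with hWdef
  have hUm := SetLike.coe_mem hK.1.eigenvectorUnitary
  have hVm := SetLike.coe_mem hM.1.eigenvectorUnitary
  have hU1 : star U * U = 1 := Matrix.mem_unitaryGroup_iff'.mp hUm
  have hU2 : U * star U = 1 := Matrix.mem_unitaryGroup_iff.mp hUm
  have hV1 : star V * V = 1 := Matrix.mem_unitaryGroup_iff'.mp hVm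
  have hV2 : V * star V = 1 := Matrix.mem_unitaryGroup_iff.mp hVm
  have hW1 : star W * W = 1 := by
    rw [hWdef, Matrix.star_mul, star_star]
    calc star U * V * (star V * U) = star U * (V * star V) * U := by
          simp only [mul_assoc]
    _ = 1 := by rw [hV2, mul_one, hU1]
  have hW2 : W * star W = 1 := by
    rw [hWdef, Matrix.star_mul, star_star]
    calc star V * U * (star U * V) = star V * (U * star U) * V := by
          simp only [mul_assoc]
    _ = 1 := by rw [hU2, mul_one, hV1]
  set w : n → n → ℝ := fun i j => Complex.normSq (W j i) with hw
  set ν : n → ℝ := fun i => ∑ j, μ j * w i j with hν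
  have hN : ∀ i, (star U * M * U) i i = ((ν i : ℝ) : ℂ) := by
    intro i
    have hMsp : M = V * (Matrix.diagonal (RCLike.ofReal ∘ μ) : Matrix n n ℂ) * star V :=
      hM.1.spectral_theorem
    have he : star U * M * U
        = star W * (Matrix.diagonal (RCLike.ofReal ∘ μ) : Matrix n n ℂ) * W := by
      rw [hWdef, Matrix.star_mul, star_star]
      conv_lhs => rw [hMsp]
      simp only [mul_assoc]
    rw [he, conj_entry]
  have htr : ((M * K).trace).re = ∑ i, ν i * d i := by
    have hKsp : K = U * (Matrix.diagonal (RCLike.ofReal ∘ d) : Matrix n n ℂ) * star U :=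
      hK.1.spectral_theorem
    have e1 : (M * K).trace
        = ((star U * M * U) * (Matrix.diagonal (RCLike.ofReal ∘ d) : Matrix n n ℂ)).trace := by
      conv_lhs => rw [hKsp]
      rw [show M * (U * (Matrix.diagonal (RCLike.ofReal ∘ d) : Matrix n n ℂ) * star U)
          = (M * U * (Matrix.diagonal (RCLike.ofReal ∘ d) : Matrix n n ℂ)) * star U by
            simp only [mul_assoc]]
      rw [Matrix.trace_mul_comm]
      simp only [mul_assoc]
    have e2 : ((star U * M * U) * (Matrix.diagonal (RCLike.ofReal ∘ d) : Matrix n n ℂ)).trace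
        = ((∑ i, ν i * d i : ℝ) : ℂ) := by
      rw [Matrix.trace, Complex.ofReal_sum]
      refine Finset.sum_congr rfl fun i _ => ?_
      rw [Matrix.diag_apply, Matrix.mul_diagonal, hN i]
      simp only [Function.comp_apply]
      rw [Complex.ofReal_mul]
      rfl
    rw [e1, e2, Complex.ofReal_re]
  have hμ0 : ∀ j, 0 ≤ μ j := fun j => (hM.eigenvalues_pos j).le
  have hw0 : ∀ i j, 0 ≤ w i j := fun i j => Complex.normSq_nonneg _
  have hcol : ∀ i, ∑ j, w i j = 1 := fun i => unitary_col_sum hW1 i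
  have hrow : ∀ j, ∑ i, w i j = 1 := fun j => unitary_row_sum hW2 j
  have hν0 : ∀ i, 0 ≤ ν i := fun i =>
    Finset.sum_nonneg fun j _ => mul_nonneg (hμ0 j) (hw0 i j)
  have hd0 : ∀ i, 0 ≤ d i := fun i => (hK.eigenvalues_pos i).le
  have hjensen : ∀ i, ν i ^ z ≤ ∑ j, w i j * μ j ^ z := by
    intro i
    have h := (convexOn_rpow hz.le).map_sum_le (fun j _ => hw0 i j) (hcol i)
      (fun j _ => Set.mem_Ici.mpr (hμ0 j))
    have hνi : ν i = ∑ j, w i j • μ j := by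
      rw [hν]
      exact Finset.sum_congr rfl fun j _ => by rw [smul_eq_mul, mul_comm]
    rw [hνi]
    simpa using h
  have hpinch : ∑ i, ν i ^ z ≤ ∑ j, μ j ^ z := by
    calc ∑ i, ν i ^ z ≤ ∑ i, ∑ j, w i j * μ j ^ z :=
          Finset.sum_le_sum fun i _ => hjensen i
    _ = ∑ j, (∑ i, w i j) * μ j ^ z := by
          rw [Finset.sum_comm]
          exact Finset.sum_congr rfl fun j _ => by rw [Finset.sum_mul]
    _ = ∑ j, μ j ^ z := by
          refine Finset.sum_congr rfl fun j _ => ?_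
          rw [hrow j, one_mul]
  have hyoung : ∀ i, ν i * d i ≤ ν i ^ z / z + d i ^ q / q := fun i =>
    Real.young_inequality_of_nonneg (hν0 i) (hd0 i) hpq
  have h1 : ∑ i, ν i * d i ≤ (∑ i, ν i ^ z) / z + (∑ i, d i ^ q) / q := by
    calc ∑ i, ν i * d i ≤ ∑ i, (ν i ^ z / z + d i ^ q / q) :=
          Finset.sum_le_sum fun i _ => hyoung i
    _ = _ := by rw [Finset.sum_add_distrib, ← Finset.sum_div, ← Finset.sum_div]
  have hq0 : (0:ℝ) < q := hpq.symm.pos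
  have hzq : z / q = z - 1 := by
    rw [hq, div_div_eq_mul_div, mul_comm, mul_div_assoc, div_self hz0.ne', mul_one]
  rw [htr, trace_mpow_re hM.1, trace_mpow_re hK.1]
  calc z * ∑ i, ν i * d i ≤ z * ((∑ i, ν i ^ z) / z + (∑ i, d i ^ q) / q) :=
        mul_le_mul_of_nonneg_left h1 hz0.le
  _ = (∑ i, ν i ^ z) + (z / q) * (∑ i, d i ^ q) := by
        field_simp
  _ = (∑ i, ν i ^ z) + (z - 1) * (∑ i, d i ^ q) := by rw [hzq]
  _ ≤ (∑ j, μ j ^ z) + (z - 1) * (∑ i, d i ^ q) := add_le_add_left hpinch _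

end aux

set_option maxHeartbeats 1000000 in
/-- Variational formula: for positive definite `ρ, σ`, `α > 1`, `z > 1`,
`sup_{H > 0} f(H) = Tr[(σ^{(1-α)/(2z)} ρ^{α/z} σ^{(1-α)/(2z)})^z]`, attained at
`H = σ^{(1-z)/(2z)} (σ^{(1-α)/(2z)} ρ^{α/z} σ^{(1-α)/(2z)})^{z-1} σ^{(1-z)/(2z)}`. -/
theorem variational_trace_functional {n : Type*} [Fintype n] [DecidableEq n]
    (ρ σ : Matrix n n ℂ) (hρ : ρ.PosDef) (hσ : σ.PosDef)
    (α z : ℝ) (hα : 1 < α) (hz : 1 < z) :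
    let f : Matrix n n ℂ → ℝ := fun H =>
      z * ((mpow σ ((z - α) / (2 * z)) * mpow ρ (α / z) * mpow σ ((z - α) / (2 * z)) * H).trace).re
        - (z - 1) *
          ((mpow (mpow σ ((z - 1) / (2 * z)) * H * mpow σ ((z - 1) / (2 * z))) (z / (z - 1))).trace).re
    let Ψ : ℝ :=
      ((mpow (mpow σ ((1 - α) / (2 * z)) * mpow ρ (α / z) * mpow σ ((1 - α) / (2 * z))) z).trace).re
    let Hbar : Matrix n n ℂ :=
      mpow σ ((1 - z) / (2 * z)) *
        mpow (mpow σ ((1 - α) / (2 * z)) * mpow ρ (α / z) * mpow σ ((1 - α) / (2 * z))) (z - 1) *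
          mpow σ ((1 - z) / (2 * z))
    (∀ H : Matrix n n ℂ, H.PosDef → f H ≤ Ψ) ∧ Hbar.PosDef ∧ f Hbar = Ψ := by
  intro f Ψ Hbar
  have hz1 : z - 1 ≠ 0 := sub_ne_zero.mpr hz.ne'
  set Bm : Matrix n n ℂ := mpow σ ((z - 1) / (2 * z)) with hBm
  set s : Matrix n n ℂ := mpow σ ((1 - α) / (2 * z)) with hs
  set P : Matrix n n ℂ := mpow ρ (α / z) with hP
  set M : Matrix n n ℂ := s * P * s with hMdef
  have hsPD : s.PosDef := mpow_posDef hσ _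
  have hPPD : P.PosDef := mpow_posDef hρ _
  have hBmPD : Bm.PosDef := mpow_posDef hσ _
  have hM : M.PosDef := by
    have h := posDef_conj hPPD hsPD.isUnit
    rwa [hsPD.1.eq] at h
  have e1 : Bm * s = mpow σ ((z - α) / (2 * z)) := by
    rw [hBm, hs, mpow_mul_mpow hσ,
      show (z - 1) / (2 * z) + (1 - α) / (2 * z) = (z - α) / (2 * z) from by ring]
  have e2 : s * Bm = mpow σ ((z - α) / (2 * z)) := by
    rw [hBm, hs, mpow_mul_mpow hσ,
      show (1 - α) / (2 * z) + (z - 1) / (2 * z) = (z - α) / (2 * z) from by ring]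
  have e3 : Bm * mpow σ ((1 - z) / (2 * z)) = 1 := by
    rw [hBm, mpow_mul_mpow hσ,
      show (z - 1) / (2 * z) + (1 - z) / (2 * z) = (0:ℝ) from by ring]
    exact mpow_zero hσ.1
  have e4 : mpow σ ((1 - z) / (2 * z)) * Bm = 1 := by
    rw [hBm, mpow_mul_mpow hσ,
      show (1 - z) / (2 * z) + (z - 1) / (2 * z) = (0:ℝ) from by ring]
    exact mpow_zero hσ.1
  have hA' : Bm * M * Bm = mpow σ ((z - α) / (2 * z)) * P * mpow σ ((z - α) / (2 * z)) := by
    have h : Bm * M * Bm = (Bm * s) * P * (s * Bm) := by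
      simp only [hMdef, mul_assoc]
    rw [h, e1, e2]
  have htrace : ∀ H : Matrix n n ℂ,
      ((Bm * M * Bm) * H).trace = (M * (Bm * H * Bm)).trace := by
    intro H
    calc (Bm * M * Bm * H).trace = (Bm * (M * (Bm * H))).trace := by simp only [mul_assoc]
    _ = ((M * (Bm * H)) * Bm).trace := Matrix.trace_mul_comm _ _
    _ = (M * (Bm * H * Bm)).trace := by simp only [mul_assoc]
  have hpart1 : ∀ H : Matrix n n ℂ, H.PosDef →
      z * ((mpow σ ((z - α) / (2 * z)) * P * mpow σ ((z - α) / (2 * z)) * H).trace).re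
        - (z - 1) * ((mpow (Bm * H * Bm) (z / (z - 1))).trace).re
      ≤ ((mpow M z).trace).re := by
    intro H hH
    have hK : (Bm * H * Bm).PosDef := by
      have h := posDef_conj hH hBmPD.isUnit
      rwa [hBmPD.1.eq] at h
    have hki := key_ineq hM hK hz
    rw [show mpow σ ((z - α) / (2 * z)) * P * mpow σ ((z - α) / (2 * z)) = Bm * M * Bm
      from hA'.symm, htrace H]
    linarith
  -- the maximizer
  have hX : (mpow M (z - 1)).PosDef := mpow_posDef hM _
  have hB' : (mpow σ ((1 - z) / (2 * z))).PosDef := mpow_posDef hσ _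
  have hpart2 : (mpow σ ((1 - z) / (2 * z)) * mpow M (z - 1) * mpow σ ((1 - z) / (2 * z))).PosDef := by
    have h := posDef_conj hX hB'.isUnit
    rwa [hB'.1.eq] at h
  have hKbar : Bm * (mpow σ ((1 - z) / (2 * z)) * mpow M (z - 1) * mpow σ ((1 - z) / (2 * z))) * Bm
      = mpow M (z - 1) := by
    calc Bm * (mpow σ ((1 - z) / (2 * z)) * mpow M (z - 1) * mpow σ ((1 - z) / (2 * z))) * Bm
        = (Bm * mpow σ ((1 - z) / (2 * z))) * mpow M (z - 1)
          * (mpow σ ((1 - z) / (2 * z)) * Bm) := by simp only [mul_assoc]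
    _ = mpow M (z - 1) := by rw [e3, e4, one_mul, mul_one]
  have ht1 : M * mpow M (z - 1) = mpow M z := by
    rw [show M * mpow M (z - 1) = mpow M 1 * mpow M (z - 1) from by rw [mpow_one hM.1],
      mpow_mul_mpow hM, show (1:ℝ) + (z - 1) = z from by ring]
  have ht2 : mpow (mpow M (z - 1)) (z / (z - 1)) = mpow M z := by
    rw [mpow_mpow hM, show (z - 1) * (z / (z - 1)) = z from by
      rw [mul_comm, div_mul_cancel₀ _ hz1]]
  have hpart3 :
      z * ((mpow σ ((z - α) / (2 * z)) * P * mpow σ ((z - α) / (2 * z))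
            * (mpow σ ((1 - z) / (2 * z)) * mpow M (z - 1) * mpow σ ((1 - z) / (2 * z)))).trace).re
        - (z - 1) * ((mpow (Bm * (mpow σ ((1 - z) / (2 * z)) * mpow M (z - 1)
            * mpow σ ((1 - z) / (2 * z))) * Bm) (z / (z - 1))).trace).re
      = ((mpow M z).trace).re := by
    rw [show mpow σ ((z - α) / (2 * z)) * P * mpow σ ((z - α) / (2 * z)) = Bm * M * Bm
      from hA'.symm, htrace, hKbar, ht1, ht2]
    ring
  exact ⟨fun H hH => hpart1 H hH, hpart2, hpart3⟩
end
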